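/- For n ≥ 1, the number of Tamari intervals of size n that are both modern and synchronized equals the n-th Catalan number C(2n, n)/(n+1). -/

import Mathlib

/-- Binary trees: a leaf or a binary node with two subtrees. -/
inductive BT : Type
  | leaf : BT
  | node : BT → BT → BT

namespace BT

/-- Number of binary (internal) nodes. -/
def size : BT → ℕ
  | leaf => 0
  | node l r => l.size + r.size + 1

/-- One right rotation somewhere in the tree: ((A,B),C) ↦ (A,(B,C)). -/
inductive Rot : BT → BT → Prop
  | rotate (A B C : BT) : Rot (node (node A B) C) (node A (node B C))
  | left {l l' : BT} (r : BT) : Rot l l' → Rot (node l r) (node l' r)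
  | right (l : BT) {r r' : BT} : Rot r r' → Rot (node l r) (node l r')

/-- Tamari order: reflexive-transitive closure of right rotation. -/
def tle (T T' : BT) : Prop := Relation.ReflTransGen Rot T T'

/-- Bracket-vector: sizes of right subtrees of nodes, in infix order. -/
def bracket : BT → List ℕ
  | leaf => []
  | node l r => bracket l ++ r.size :: bracket r

/-- Dual bracket-vector: sizes of left subtrees of nodes, in infix order. -/
def dualBracket : BT → List ℕ
  | leaf => []
  | node l r => dualBracket l ++ l.size :: dualBracket r

/-- Canopy word: for each leaf (left to right), 1 if it is a left child, 0 if a right child;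
the argument `b` is the value assigned to the tree if it is itself a leaf. -/
def canopyAux (b : ℕ) : BT → List ℕ
  | leaf => [b]
  | node l r => canopyAux 1 l ++ canopyAux 0 r

/-- Canopy-vector of a binary tree. -/
def canopy (T : BT) : List ℕ := canopyAux 1 T

/-- Left-right mirror. -/
def mir : BT → BT
  | leaf => leaf
  | node l r => node (mir r) (mir l)

/-- Tamari interval of size n. -/
def interval (p : BT × BT) (n : ℕ) : Prop :=
  p.1.size = n ∧ p.2.size = n ∧ tle p.1 p.2

/-- Tamari interval (of unspecified size). -/
def isInt (p : BT × BT) : Prop := p.1.size = p.2.size ∧ tle p.1 p.2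

/-- The rise operation (T,T') ↦ ((T,ε),(ε,T')). -/
def riseF (p : BT × BT) : BT × BT := (node p.1 leaf, node leaf p.2)

/-- An interval is modern when its rise is again an interval. -/
def modern (p : BT × BT) : Prop := tle (node p.1 leaf) (node leaf p.2)

/-- Infinitely modern: every iterated rise is an interval. -/
def infModern (p : BT × BT) : Prop :=
  ∀ k : ℕ, tle ((riseF^[k] p).1) ((riseF^[k] p).2)

/-- Synchronized: equal canopies. -/
def synced (p : BT × BT) : Prop := canopy p.1 = canopy p.2

/-- Self-dual: equal to its dual (mir T', mir T). -/
def selfDual (p : BT × BT) : Prop := mir p.2 = p.1 ∧ mir p.1 = p.2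

/-- Number of positions where the two canopies agree. -/
def agreeCount (p : BT × BT) : ℕ :=
  ((List.range (p.1.size + 1)).filter
    (fun i => (canopy p.1).getD i 0 == (canopy p.2).getD i 0)).length

/-- Number of canopy positions of joint type (a on top, b on bottom), for an interval (T,T')
with T' the upper tree. -/
def typeCount (a b : ℕ) (p : BT × BT) : ℕ :=
  ((List.range (p.1.size + 1)).filter
    (fun i => ((canopy p.2).getD i 0 == a) && ((canopy p.1).getD i 0 == b))).length

end BT

namespace BT

-- ### basic lemmas

theorem size_eq_zero {T : BT} (h : T.size = 0) : T = leaf := by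
  cases T with
  | leaf => rfl
  | node l r => simp [size] at h

theorem bracket_length (T : BT) : (bracket T).length = T.size := by
  induction T with
  | leaf => rfl
  | node l r hl hr => simp [bracket, size, hl, hr]; omega

theorem bracket_valid (T : BT) : ∀ i, i < T.size → (bracket T).getD i 0 + i + 1 ≤ T.size := by
  induction T with
  | leaf => intro i hi; simp [size] at hi
  | node l r hl hr =>
    intro i hi
    simp only [bracket, size] at *
    rcases lt_trichotomy i l.size with h | h | h
    · rw [List.getD_append _ _ _ _ (by rw [bracket_length]; exact h)]
      have := hl i h; omega
    · subst h
      rw [List.getD_append_right _ _ _ _ (by rw [bracket_length])]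
      simp [bracket_length]
      omega
    · rw [List.getD_append_right _ _ _ _ (by rw [bracket_length]; omega)]
      rw [bracket_length]
      have h2 : i - l.size = (i - l.size - 1) + 1 := by omega
      rw [h2, List.getD_cons_succ]
      have := hr (i - l.size - 1) (by omega)
      omega

theorem bracket_getD_le {T : BT} {m : ℕ} (h : T.size = m) (i : ℕ) :
    (bracket T).getD i 0 + 1 ≤ m ∨ (bracket T).getD i 0 = 0 := by
  rcases lt_or_ge i T.size with hi | hi
  · left; have := bracket_valid T i hi; omega
  · right; apply List.getD_eq_default; rw [bracket_length]; exact hi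

-- ### pointwise order on lists

def vle (u v : List ℕ) : Prop := u.length = v.length ∧ ∀ i, u.getD i 0 ≤ v.getD i 0

theorem vle_refl (u : List ℕ) : vle u u := ⟨rfl, fun _ => le_refl _⟩

theorem vle_trans {u v w : List ℕ} (h1 : vle u v) (h2 : vle v w) : vle u w :=
  ⟨h1.1.trans h2.1, fun i => (h1.2 i).trans (h2.2 i)⟩

theorem getD_append_general (x y : List ℕ) (i : ℕ) :
    (x ++ y).getD i 0 = if i < x.length then x.getD i 0 else y.getD (i - x.length) 0 := by
  split
  · exact List.getD_append _ _ _ _ (by assumption)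
  · exact List.getD_append_right _ _ _ _ (by omega)

theorem vle_mid {x w : List ℕ} {a b : ℕ} (h : a ≤ b) : vle (x ++ a :: w) (x ++ b :: w) := by
  constructor
  · simp
  · intro i
    rw [getD_append_general, getD_append_general]
    split
    · exact le_refl _
    · rcases Nat.eq_or_lt_of_le (Nat.le_of_not_lt (by assumption)) with h2 | h2
      · rw [← h2]; simpa using h
      · have h3 : i - x.length = (i - x.length - 1) + 1 := by omega
        rw [h3]; simp

theorem rot_size {T T' : BT} (h : Rot T T') : T.size = T'.size := by
  induction h with
  | rotate A B C => simp [size]; omega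
  | left r _ ih => simp [size, ih]
  | right l _ ih => simp [size, ih]

theorem tle_size {T T' : BT} (h : tle T T') : T.size = T'.size := by
  induction h with
  | refl => rfl
  | tail _ h2 ih => exact ih.trans (rot_size h2)

theorem vle_of_rot {T T' : BT} (h : Rot T T') : vle (bracket T) (bracket T') := by
  induction h with
  | rotate A B C =>
    have e1 : bracket (node (node A B) C)
        = bracket A ++ B.size :: (bracket B ++ C.size :: bracket C) := by
      simp [bracket]
    have e2 : bracket (node A (node B C))
        = bracket A ++ (B.size + C.size + 1) :: (bracket B ++ C.size :: bracket C) := by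
      simp [bracket, size]
    rw [e1, e2]
    exact vle_mid (by omega)
  | @left l l' r _ ih =>
    constructor
    · simp [bracket, bracket_length, ih.1]
    · intro i
      simp only [bracket]
      rw [getD_append_general, getD_append_general, ih.1]
      split
      · exact ih.2 i
      · exact le_refl _
  | @right l r r' hr ih =>
    have hs : r.size = r'.size := rot_size hr
    constructor
    · simp [bracket, bracket_length, hs, ih.1]
    · intro i
      simp only [bracket]
      rw [getD_append_general, getD_append_general]
      split
      · exact le_refl _
      · rw [hs]
        rcases Nat.eq_zero_or_pos (i - (bracket l).length) with h0 | h0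
        · rw [h0, List.getD_cons_zero, List.getD_cons_zero]
        · have h3 : i - (bracket l).length = (i - (bracket l).length - 1) + 1 := by omega
          rw [h3, List.getD_cons_succ, List.getD_cons_succ]
          exact ih.2 _




theorem vle_of_tle {T T' : BT} (h : tle T T') : vle (bracket T) (bracket T') := by
  induction h with
  | refl => exact vle_refl _
  | tail _ h2 ih => exact vle_trans ih (vle_of_rot h2)

theorem tle_left {l l' : BT} (r : BT) (h : tle l l') : tle (node l r) (node l' r) := by
  induction h with
  | refl => exact Relation.ReflTransGen.refl
  | tail _ h2 ih => exact Relation.ReflTransGen.tail ih (Rot.left r h2)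

theorem tle_right (l : BT) {r r' : BT} (h : tle r r') : tle (node l r) (node l r') := by
  induction h with
  | refl => exact Relation.ReflTransGen.refl
  | tail _ h2 ih => exact Relation.ReflTransGen.tail ih (Rot.right l h2)

theorem tle_node {a a' b b' : BT} (h1 : tle a a') (h2 : tle b b') :
    tle (node a b) (node a' b') :=
  Relation.ReflTransGen.trans (tle_left b h1) (tle_right a' h2)

theorem split_exists : ∀ (T : BT) (j : ℕ), j < T.size →
    (∀ i, i < j → (bracket T).getD i 0 + i + 1 ≤ j) →
    ∃ D E : BT, D.size = j ∧ tle T (node D E) ∧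
      ∃ x, bracket T = bracket D ++ x :: bracket E := by
  intro T
  induction T with
  | leaf => intro j hj _; simp [size] at hj
  | node A B ihA _ =>
    intro j hj hcl
    by_cases h : j = A.size
    · exact ⟨A, B, h.symm, Relation.ReflTransGen.refl, B.size, rfl⟩
    · have hjA : j < A.size := by
        rcases lt_or_ge j A.size with h1 | h1
        · exact h1
        · exfalso
          have h2 : A.size < j := by omega
          have h3 := hcl A.size h2
          have h4 : (bracket (node A B)).getD A.size 0 = B.size := by
            show ((bracket A) ++ B.size :: bracket B).getD A.size 0 = B.size
            rw [List.getD_append_right _ _ _ _ (by rw [bracket_length])]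
            simp [bracket_length]
          rw [h4] at h3
          simp only [size] at hj
          omega
      obtain ⟨D, E', hD, htle, x, hbr⟩ := ihA j hjA (by
        intro i hi
        have := hcl i hi
        have e : (bracket (node A B)).getD i 0 = (bracket A).getD i 0 := by
          show ((bracket A) ++ B.size :: bracket B).getD i 0 = _
          exact List.getD_append _ _ _ _ (by rw [bracket_length]; omega)
        omega)
      refine ⟨D, node E' B, hD, ?_, x, ?_⟩
      · exact Relation.ReflTransGen.tail (tle_left B htle) (Rot.rotate D E' B)
      · show bracket A ++ B.size :: bracket B = _
        rw [hbr]
        simp [bracket]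

theorem tle_of_vle : ∀ (n : ℕ) (T T' : BT), T.size = n →
    vle (bracket T) (bracket T') → tle T T' := by
  intro n
  induction n using Nat.strong_induction_on with
  | _ n ih =>
    intro T T' hsz hvle
    have hsz' : T'.size = n := by
      rw [← bracket_length, ← hvle.1, bracket_length, hsz]
    cases T' with
    | leaf =>
      have : T = leaf := size_eq_zero (by rw [hsz, ← hsz']; rfl)
      rw [this]
      exact Relation.ReflTransGen.refl
    | node A' B' =>
      have hn : 0 < n := by rw [← hsz']; simp [size]
      set k' := A'.size with hk'
      have hk'n : k' < n := by rw [← hsz']; simp [size]; omega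
      have hbrT' : bracket (node A' B') = bracket A' ++ B'.size :: bracket B' := rfl
      obtain ⟨D, E, hD, htle, x, hbr⟩ := split_exists T k' (by omega) (by
        intro i hi
        have h1 := hvle.2 i
        have h2 : (bracket (node A' B')).getD i 0 = (bracket A').getD i 0 := by
          rw [hbrT']
          exact List.getD_append _ _ _ _ (by rw [bracket_length]; exact hi)
        have h3 := bracket_valid A' i (by rw [← hk']; exact hi)
        rw [h2] at h1
        omega)
      -- lengths
      have hlenT : (bracket T).length = n := by rw [bracket_length, hsz]
      have hlenD : (bracket D).length = k' := by rw [bracket_length, hD]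
      have hlenE : (bracket E).length = n - k' - 1 := by
        have := hlenT
        rw [hbr] at this
        simp [hlenD] at this
        omega
      have hlenA' : (bracket A').length = k' := by rw [bracket_length]
      have hlenB' : (bracket B').length = n - k' - 1 := by
        rw [bracket_length]
        simp only [size] at hsz'
        omega
      have hvD : vle (bracket D) (bracket A') := by
        constructor
        · rw [hlenD, hlenA']
        · intro i
          rcases lt_or_ge i k' with hi | hi
          · have h1 := hvle.2 i
            rw [hbr, List.getD_append _ _ _ _ (by omega)] at h1
            rw [hbrT', List.getD_append _ _ _ _ (by omega)] at h1
            exact h1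
          · rw [List.getD_eq_default _ _ (by omega), List.getD_eq_default _ _ (by omega)]
      have hvE : vle (bracket E) (bracket B') := by
        constructor
        · rw [hlenE, hlenB']
        · intro i
          rcases lt_or_ge i (n - k' - 1) with hi | hi
          · have h1 := hvle.2 (k' + 1 + i)
            rw [hbr, List.getD_append_right _ _ _ _ (by omega)] at h1
            rw [hbrT', List.getD_append_right _ _ _ _ (by omega)] at h1
            have e1 : k' + 1 + i - (bracket D).length = i + 1 := by omega
            have e2 : k' + 1 + i - (bracket A').length = i + 1 := by omega
            rw [e1, e2, List.getD_cons_succ, List.getD_cons_succ] at h1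
            exact h1
          · rw [List.getD_eq_default _ _ (by omega), List.getD_eq_default _ _ (by omega)]
      have hsD : D.size = k' := hD
      have hsE : E.size = n - k' - 1 := by rw [← bracket_length, hlenE]
      have t1 : tle D A' := ih k' (by omega) D A' hsD hvD
      have t2 : tle E B' := ih (n - k' - 1) (by omega) E B' hsE hvE
      exact Relation.ReflTransGen.trans htle (tle_node t1 t2)

theorem tle_iff {T T' : BT} : tle T T' ↔ vle (bracket T) (bracket T') :=
  ⟨vle_of_tle, fun h => tle_of_vle T.size T T' rfl h⟩


-- canopy lemmas
theorem canopyAux_eq (T : BT) :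
    canopyAux 1 T = 1 :: (bracket T).map (fun x => min x 1) ∧
    canopyAux 0 T = (min T.size 1) :: (bracket T).map (fun x => min x 1) := by
  induction T with
  | leaf => simp [canopyAux, bracket, size]
  | node l r ihl ihr =>
    have e : canopyAux 1 (node l r) = canopyAux 1 l ++ canopyAux 0 r := rfl
    have e0 : canopyAux 0 (node l r) = canopyAux 1 l ++ canopyAux 0 r := rfl
    have key : canopyAux 1 l ++ canopyAux 0 r
        = 1 :: (bracket (node l r)).map (fun x => min x 1) := by
      rw [ihl.1, ihr.2]
      show _ = 1 :: (bracket l ++ r.size :: bracket r).map (fun x => min x 1)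
      simp [List.map_append]
    constructor
    · rw [e, key]
    · rw [e0, key]; simp [size]

theorem canopy_eq (T : BT) : canopy T = 1 :: (bracket T).map (fun x => min x 1) :=
  (canopyAux_eq T).1

-- getD of map (min . 1)
theorem getD_map_min (l : List ℕ) (i : ℕ) :
    (l.map (fun x => min x 1)).getD i 0 = min (l.getD i 0) 1 := by
  rcases lt_or_ge i l.length with h | h
  · rw [List.getD_eq_getElem _ _ (by simpa using h), List.getD_eq_getElem _ _ h]
    simp
  · rw [List.getD_eq_default _ _ (by simpa using h), List.getD_eq_default _ _ h]
    simp

theorem map_min_eq_iff {u v : List ℕ} :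
    u.map (fun x => min x 1) = v.map (fun x => min x 1) ↔
      (u.length = v.length ∧ ∀ i, min (u.getD i 0) 1 = min (v.getD i 0) 1) := by
  constructor
  · intro h
    have hlen : u.length = v.length := by
      have := congrArg List.length h; simpa using this
    refine ⟨hlen, fun i => ?_⟩
    have h2 := congrArg (fun l => l.getD i 0) h
    rw [getD_map_min, getD_map_min] at h2
    exact h2
  · rintro ⟨hlen, h⟩
    apply List.ext_getElem (by simpa using hlen)
    intro i h1 h2
    have h3 := h i
    rw [← getD_map_min, ← getD_map_min] at h3
    rw [← List.getD_eq_getElem _ 0 h1, ← List.getD_eq_getElem _ 0 h2]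
    exact h3

-- spines
def lspine : ℕ → BT → BT
  | 0, T => T
  | r+1, T => node (lspine r T) leaf

def rspine : ℕ → BT → BT
  | 0, T => T
  | r+1, T => node leaf (rspine r T)

def desc : ℕ → ℕ → List ℕ
  | 0, _ => []
  | r+1, m => (m + r) :: desc r m

theorem lspine_size (r : ℕ) (T : BT) : (lspine r T).size = T.size + r := by
  induction r with
  | zero => rfl
  | succ r ih => simp [lspine, size, ih]; omega

theorem rspine_size (r : ℕ) (T : BT) : (rspine r T).size = T.size + r := by
  induction r with
  | zero => rfl
  | succ r ih => simp [rspine, size, ih]; omega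

theorem desc_length (r m : ℕ) : (desc r m).length = r := by
  induction r with
  | zero => rfl
  | succ r ih => simp [desc, ih]

theorem desc_getD (r m : ℕ) (i : ℕ) (h : i < r) : (desc r m).getD i 0 = m + r - 1 - i := by
  induction r generalizing i with
  | zero => omega
  | succ r ih =>
    cases i with
    | zero => simp [desc]
    | succ i =>
      rw [show desc (r+1) m = (m+r) :: desc r m from rfl, List.getD_cons_succ, ih i (by omega)]
      omega

theorem bracket_lspine (r : ℕ) (T : BT) :
    bracket (lspine r T) = bracket T ++ List.replicate r 0 := by
  induction r with
  | zero => simp [lspine]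
  | succ r ih =>
    show bracket (lspine r T) ++ (0 : ℕ) :: bracket leaf = _
    rw [ih]
    show (bracket T ++ List.replicate r 0) ++ [0] = bracket T ++ List.replicate (r+1) 0
    rw [List.append_assoc]
    congr 1
    exact (List.replicate_succ' (n := r) (a := (0:ℕ))).symm

theorem bracket_rspine (r : ℕ) (T : BT) :
    bracket (rspine r T) = desc r T.size ++ bracket T := by
  induction r with
  | zero => simp [rspine, desc]
  | succ r ih =>
    show bracket leaf ++ (rspine r T).size :: bracket (rspine r T) = _
    rw [ih, rspine_size]
    rfl

theorem pad_getD (u : List ℕ) (r i : ℕ) : (u ++ List.replicate r 0).getD i 0 = u.getD i 0 := by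
  rcases lt_or_ge i u.length with h | h
  · exact List.getD_append _ _ _ _ h
  · rw [List.getD_append_right _ _ _ _ h, List.getD_eq_default _ _ h]
    rcases lt_or_ge (i - u.length) r with h2 | h2
    · rw [List.getD_eq_getElem _ _ (by simpa using h2)]
      simp
    · rw [List.getD_eq_default _ _ (by simpa using h2)]


def Cc (r : ℕ) (u v : List ℕ) : Prop := ∀ j, u.getD (j+r) 0 ≤ v.getD j 0

def Sc (r : ℕ) (u v : List ℕ) : Prop :=
  (∀ i, i < r → 0 < u.getD i 0) ∧ ∀ j, min (u.getD (j+r) 0) 1 = min (v.getD j 0) 1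

def Qc (r : ℕ) (T T' : BT) : Prop :=
  Cc r (bracket T) (bracket T') ∧ Cc (r+1) (bracket T) (bracket T') ∧
    Sc r (bracket T) (bracket T')

def Wmem (r m : ℕ) (p : BT × BT) : Prop :=
  p.1.size = m ∧ p.2.size = m ∧
  tle (lspine r p.1) (rspine r p.2) ∧ tle (lspine (r+1) p.1) (rspine (r+1) p.2) ∧
  canopy (lspine r p.1) = canopy (rspine r p.2)

theorem cond_iff {r m : ℕ} {T T' : BT} (hT : T.size = m) (hT' : T'.size = m) :
    tle (lspine r T) (rspine r T') ↔ Cc r (bracket T) (bracket T') := by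
  rw [tle_iff, bracket_lspine, bracket_rspine, hT']
  constructor
  · intro h j
    have h2 := h.2 (j + r)
    rw [pad_getD] at h2
    rw [List.getD_append_right _ _ _ _ (by rw [desc_length]; omega)] at h2
    rw [desc_length] at h2
    simpa using h2
  · intro h
    constructor
    · simp [desc_length, bracket_length, hT, hT']
      omega
    · intro i
      rw [pad_getD]
      rcases lt_or_ge i r with hi | hi
      · rw [List.getD_append _ _ _ _ (by rw [desc_length]; omega), desc_getD _ _ _ hi]
        rcases bracket_getD_le hT i with h2 | h2 <;> omega
      · rw [List.getD_append_right _ _ _ _ (by rw [desc_length]; omega), desc_length]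
        have h3 := h (i - r)
        rw [show i - r + r = i by omega] at h3
        exact h3

theorem sync_iff {r m : ℕ} {T T' : BT} (hT : T.size = m) (hT' : T'.size = m) (hm : 1 ≤ m) :
    canopy (lspine r T) = canopy (rspine r T') ↔ Sc r (bracket T) (bracket T') := by
  rw [canopy_eq, canopy_eq, bracket_lspine, bracket_rspine, hT']
  rw [List.cons_eq_cons]
  simp only [true_and]
  rw [map_min_eq_iff]
  constructor
  · rintro ⟨hlen, h⟩
    constructor
    · intro i hi
      have h2 := h i
      rw [pad_getD] at h2
      rw [List.getD_append _ _ _ _ (by rw [desc_length]; omega), desc_getD _ _ _ hi] at h2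
      omega
    · intro j
      have h2 := h (j + r)
      rw [pad_getD] at h2
      rw [List.getD_append_right _ _ _ _ (by rw [desc_length]; omega), desc_length] at h2
      simpa using h2
  · rintro ⟨h1, h2⟩
    constructor
    · simp [desc_length, bracket_length, hT, hT']
      omega
    · intro i
      rw [pad_getD]
      rcases lt_or_ge i r with hi | hi
      · rw [List.getD_append _ _ _ _ (by rw [desc_length]; omega), desc_getD _ _ _ hi]
        have := h1 i hi
        omega
      · rw [List.getD_append_right _ _ _ _ (by rw [desc_length]; omega), desc_length]
        have h3 := h2 (i - r)
        rw [show i - r + r = i by omega] at h3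
        exact h3

theorem Wmem_iff {r m : ℕ} {p : BT × BT} (hm : 1 ≤ m) :
    Wmem r m p ↔ p.1.size = m ∧ p.2.size = m ∧ Qc r p.1 p.2 := by
  unfold Wmem Qc
  constructor
  · rintro ⟨h1, h2, h3, h4, h5⟩
    exact ⟨h1, h2, (cond_iff h1 h2).1 h3, (cond_iff h1 h2).1 h4, (sync_iff h1 h2 hm).1 h5⟩
  · rintro ⟨h1, h2, h3, h4, h5⟩
    exact ⟨h1, h2, (cond_iff h1 h2).2 h3, (cond_iff h1 h2).2 h4, (sync_iff h1 h2 hm).2 h5⟩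


theorem br_nl (B : BT) : bracket (node leaf B) = B.size :: bracket B := rfl

theorem br_nr (A : BT) : bracket (node A leaf) = bracket A ++ [0] := by
  show bracket A ++ (size leaf) :: bracket leaf = _
  rfl

theorem app0_getD (a : List ℕ) (i : ℕ) : (a ++ [0]).getD i 0 = a.getD i 0 := by
  rcases lt_or_ge i a.length with h | h
  · exact List.getD_append _ _ _ _ h
  · rw [List.getD_append_right _ _ _ _ h, List.getD_eq_default _ _ h]
    rcases Nat.eq_or_lt_of_le h with h2 | h2
    · rw [← h2, Nat.sub_self, List.getD_cons_zero]
    · rw [List.getD_eq_default _ _ (by simp; omega)]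

theorem consb_le {m : ℕ} {B : BT} (hB : B.size = m - 1) (hm : 1 ≤ m) (x : ℕ) :
    ((m - 1) :: bracket B).getD x 0 ≤ m - 1 := by
  cases x with
  | zero => simp
  | succ x =>
    rw [List.getD_cons_succ]
    rcases bracket_getD_le hB x with h | h <;> omega

theorem appz_le {m : ℕ} {A : BT} (hA : A.size = m - 1) (hm : 1 ≤ m) (x : ℕ) :
    (bracket A ++ [0]).getD x 0 ≤ m - 1 := by
  rw [app0_getD]
  rcases bracket_getD_le hA x with h | h <;> omega

theorem QLL {r m : ℕ} (hm : 2 ≤ m) {B B' : BT} (hB : B.size = m - 1) (hB' : B'.size = m - 1) :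
    Qc r (node leaf B) (node leaf B') ↔ Qc r B B' := by
  unfold Qc Cc Sc
  rw [br_nl, br_nl, hB, hB']
  constructor
  · rintro ⟨hC1, hC2, hS1, hS2⟩
    refine ⟨fun j => ?_, fun j => ?_, ⟨fun i hi => ?_, fun j => ?_⟩⟩
    · have h := hC1 (j+1)
      rwa [show j+1+r = (j+r)+1 by omega, List.getD_cons_succ, List.getD_cons_succ] at h
    · have h := hC2 (j+1)
      rwa [show j+1+(r+1) = (j+(r+1))+1 by omega, List.getD_cons_succ,
        List.getD_cons_succ] at h
    · rcases Nat.lt_or_ge (i+1) r with h2 | h2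
      · have h := hS1 (i+1) h2
        rwa [List.getD_cons_succ] at h
      · have hir : i + 1 = r := by omega
        have h := hS2 0
        rw [show (0:ℕ)+r = r by omega, ← hir, List.getD_cons_succ, List.getD_cons_zero] at h
        omega
    · have h := hS2 (j+1)
      rwa [show j+1+r = (j+r)+1 by omega, List.getD_cons_succ, List.getD_cons_succ] at h
  · rintro ⟨hC1, hC2, hS1, hS2⟩
    refine ⟨fun j => ?_, fun j => ?_, ⟨fun i hi => ?_, fun j => ?_⟩⟩
    · cases j with
      | zero =>
        rw [show (0:ℕ)+r = r by omega, List.getD_cons_zero]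
        exact consb_le hB (by omega) r
      | succ j =>
        rw [show j+1+r = (j+r)+1 by omega, List.getD_cons_succ, List.getD_cons_succ]
        exact hC1 j
    · cases j with
      | zero =>
        rw [show (0:ℕ)+(r+1) = r+1 by omega, List.getD_cons_zero]
        exact consb_le hB (by omega) (r+1)
      | succ j =>
        rw [show j+1+(r+1) = (j+(r+1))+1 by omega, List.getD_cons_succ, List.getD_cons_succ]
        exact hC2 j
    · cases i with
      | zero => rw [List.getD_cons_zero]; omega
      | succ i =>
        rw [List.getD_cons_succ]
        exact hS1 i (by omega)
    · cases j with
      | zero =>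
        rw [show (0:ℕ)+r = r by omega, List.getD_cons_zero]
        have hur : 0 < ((m-1) :: bracket B).getD r 0 := by
          cases r with
          | zero => simp; omega
          | succ s =>
            rw [List.getD_cons_succ]
            exact hS1 s (by omega)
        omega
      | succ j =>
        rw [show j+1+r = (j+r)+1 by omega, List.getD_cons_succ, List.getD_cons_succ]
        exact hS2 j

theorem QRR {r : ℕ} {A A' : BT} :
    Qc r (node A leaf) (node A' leaf) ↔ Qc r A A' := by
  unfold Qc Cc Sc
  rw [br_nr, br_nr]
  simp only [app0_getD]

theorem QRL {r m : ℕ} (hm : 2 ≤ m) {A B' : BT} (hA : A.size = m - 1) (hB' : B'.size = m - 1) :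
    Qc r (node A leaf) (node leaf B') ↔ Qc (r+1) A B' := by
  unfold Qc Cc Sc
  rw [br_nr, br_nl, hB']
  simp only [app0_getD]
  constructor
  · rintro ⟨hC1, hC2, hS1, hS2⟩
    refine ⟨fun j => ?_, fun j => ?_, ⟨fun i hi => ?_, fun j => ?_⟩⟩
    · have h := hC1 (j+1)
      rwa [show j+1+r = j+(r+1) by omega, List.getD_cons_succ] at h
    · have h := hC2 (j+1)
      rwa [show j+1+(r+1) = j+(r+1)+1 by omega, List.getD_cons_succ] at h
    · rcases Nat.lt_or_ge i r with h2 | h2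
      · exact hS1 i h2
      · have hir : i = r := by omega
        have h := hS2 0
        rw [show (0:ℕ)+r = r by omega, List.getD_cons_zero] at h
        rw [hir]
        omega
    · have h := hS2 (j+1)
      rwa [show j+1+r = j+(r+1) by omega, List.getD_cons_succ] at h
  · rintro ⟨hC1, hC2, hS1, hS2⟩
    refine ⟨fun j => ?_, fun j => ?_, ⟨fun i hi => ?_, fun j => ?_⟩⟩
    · cases j with
      | zero =>
        rw [show (0:ℕ)+r = r by omega, List.getD_cons_zero]
        rcases bracket_getD_le hA r with h | h <;> omega
      | succ j =>
        rw [show j+1+r = j+(r+1) by omega, List.getD_cons_succ]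
        exact hC1 j
    · cases j with
      | zero =>
        rw [show (0:ℕ)+(r+1) = r+1 by omega, List.getD_cons_zero]
        rcases bracket_getD_le hA (r+1) with h | h <;> omega
      | succ j =>
        rw [show j+1+(r+1) = j+(r+1)+1 by omega, List.getD_cons_succ]
        exact hC2 j
    · exact hS1 i (by omega)
    · cases j with
      | zero =>
        rw [show (0:ℕ)+r = r by omega, List.getD_cons_zero]
        have := hS1 r (by omega)
        omega
      | succ j =>
        rw [show j+1+r = j+(r+1) by omega, List.getD_cons_succ]
        exact hS2 j

theorem QLR0 {m : ℕ} (hm : 2 ≤ m) {B A' : BT} (hB : B.size = m - 1) (hA' : A'.size = m - 1) :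
    ¬ Qc 0 (node leaf B) (node A' leaf) := by
  rintro ⟨hC1, _, _⟩
  have h := hC1 0
  rw [br_nl, br_nr, hB] at h
  rw [show (0:ℕ)+0 = 0 by omega, List.getD_cons_zero, app0_getD] at h
  rcases bracket_getD_le hA' 0 with h2 | h2 <;> omega

theorem QLR {r m : ℕ} (hm : 2 ≤ m) {B A' : BT} (hB : B.size = m - 1) (hA' : A'.size = m - 1) :
    Qc (r+1) (node leaf B) (node A' leaf) ↔ Qc r B A' := by
  unfold Qc Cc Sc
  rw [br_nl, br_nr, hB]
  simp only [app0_getD]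
  constructor
  · rintro ⟨hC1, hC2, hS1, hS2⟩
    refine ⟨fun j => ?_, fun j => ?_, ⟨fun i hi => ?_, fun j => ?_⟩⟩
    · have h := hC1 j
      rwa [show j+(r+1) = (j+r)+1 by omega, List.getD_cons_succ] at h
    · have h := hC2 j
      rwa [show j+(r+1+1) = (j+(r+1))+1 by omega, List.getD_cons_succ] at h
    · have h := hS1 (i+1) (by omega)
      rwa [List.getD_cons_succ] at h
    · have h := hS2 j
      rwa [show j+(r+1) = (j+r)+1 by omega, List.getD_cons_succ] at h
  · rintro ⟨hC1, hC2, hS1, hS2⟩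
    refine ⟨fun j => ?_, fun j => ?_, ⟨fun i hi => ?_, fun j => ?_⟩⟩
    · rw [show j+(r+1) = (j+r)+1 by omega, List.getD_cons_succ]
      exact hC1 j
    · rw [show j+(r+1+1) = (j+(r+1))+1 by omega, List.getD_cons_succ]
      exact hC2 j
    · cases i with
      | zero => rw [List.getD_cons_zero]; omega
      | succ i =>
        rw [List.getD_cons_succ]
        exact hS1 i (by omega)
    · rw [show j+(r+1) = (j+r)+1 by omega, List.getD_cons_succ]
      exact hS2 j


theorem size_eq_one {T : BT} (h : T.size = 1) : T = node leaf leaf := by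
  cases T with
  | leaf => simp [size] at h
  | node l r =>
    simp only [size] at h
    have hl : l.size = 0 := by omega
    have hr : r.size = 0 := by omega
    rw [size_eq_zero hl, size_eq_zero hr]

theorem zp_u {r : ℕ} {T T' : BT} (h : Qc r T T') :
    ∀ i, (bracket T).getD i 0 = 0 → (bracket T).getD (i+1) 0 = 0 := by
  obtain ⟨hC1, hC2, hS1, hS2⟩ := h
  intro i hi
  rcases Nat.lt_or_ge i r with hir | hir
  · have := hS1 i hir; omega
  · have h2 := hS2 (i - r)
    rw [show i - r + r = i by omega, hi] at h2
    have hv : (bracket T').getD (i - r) 0 = 0 := by omega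
    have h3 := hC2 (i - r)
    rw [show i - r + (r+1) = i + 1 by omega, hv] at h3
    omega

theorem zp_v {r : ℕ} {T T' : BT} (h : Qc r T T') :
    ∀ j, (bracket T').getD j 0 = 0 → (bracket T').getD (j+1) 0 = 0 := by
  intro j hj
  obtain ⟨hC1, hC2, hS1, hS2⟩ := h
  have h2 := hS2 j
  rw [hj] at h2
  have hu : (bracket T).getD (j + r) 0 = 0 := by omega
  have hu2 := zp_u ⟨hC1, hC2, hS1, hS2⟩ (j + r) hu
  have h3 := hS2 (j+1)
  rw [show j + 1 + r = j + r + 1 by omega, hu2] at h3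
  omega

theorem notboth_u {r : ℕ} {T T' : BT} (h : Qc r T T') {A B : BT} (hT : T = node A B)
    (hA : A ≠ leaf) (hB : B ≠ leaf) : False := by
  have hk : 1 ≤ A.size := by
    rcases Nat.eq_zero_or_pos A.size with h0 | h0
    · exact absurd (size_eq_zero h0) hA
    · exact h0
  have hb : 1 ≤ B.size := by
    rcases Nat.eq_zero_or_pos B.size with h0 | h0
    · exact absurd (size_eq_zero h0) hB
    · exact h0
  have hbr : bracket T = bracket A ++ B.size :: bracket B := by rw [hT]; rfl
  have h1 : (bracket T).getD (A.size - 1) 0 = 0 := by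
    rw [hbr, List.getD_append _ _ _ _ (by rw [bracket_length]; omega)]
    have := bracket_valid A (A.size - 1) (by omega)
    omega
  have h2 : (bracket T).getD (A.size) 0 = B.size := by
    rw [hbr, List.getD_append_right _ _ _ _ (by rw [bracket_length])]
    rw [bracket_length, Nat.sub_self, List.getD_cons_zero]
  have h3 := zp_u h (A.size - 1) h1
  rw [show A.size - 1 + 1 = A.size by omega, h2] at h3
  omega

theorem notboth_v {r : ℕ} {T T' : BT} (h : Qc r T T') {A' B' : BT} (hT' : T' = node A' B')
    (hA : A' ≠ leaf) (hB : B' ≠ leaf) : False := by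
  have hk : 1 ≤ A'.size := by
    rcases Nat.eq_zero_or_pos A'.size with h0 | h0
    · exact absurd (size_eq_zero h0) hA
    · exact h0
  have hb : 1 ≤ B'.size := by
    rcases Nat.eq_zero_or_pos B'.size with h0 | h0
    · exact absurd (size_eq_zero h0) hB
    · exact h0
  have hbr : bracket T' = bracket A' ++ B'.size :: bracket B' := by rw [hT']; rfl
  have h1 : (bracket T').getD (A'.size - 1) 0 = 0 := by
    rw [hbr, List.getD_append _ _ _ _ (by rw [bracket_length]; omega)]
    have := bracket_valid A' (A'.size - 1) (by omega)
    omega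
  have h2 : (bracket T').getD (A'.size) 0 = B'.size := by
    rw [hbr, List.getD_append_right _ _ _ _ (by rw [bracket_length])]
    rw [bracket_length, Nat.sub_self, List.getD_cons_zero]
  have h3 := zp_v h (A'.size - 1) h1
  rw [show A'.size - 1 + 1 = A'.size by omega, h2] at h3
  omega

-- converse constructors
theorem WmemLL {r m : ℕ} (hm : 2 ≤ m) {B B' : BT} (h : Wmem r (m-1) (B, B')) :
    Wmem r m (node leaf B, node leaf B') := by
  rw [Wmem_iff (by omega)] at h
  have h1 : B.size = m - 1 := h.1
  have h2 : B'.size = m - 1 := h.2.1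
  have h3 := h.2.2
  rw [Wmem_iff (by omega)]
  refine ⟨show (node leaf B).size = m by simp [size]; omega,
    show (node leaf B').size = m by simp [size]; omega, ?_⟩
  exact (QLL hm h1 h2).2 h3

theorem WmemRR {r m : ℕ} (hm : 2 ≤ m) {A A' : BT} (h : Wmem r (m-1) (A, A')) :
    Wmem r m (node A leaf, node A' leaf) := by
  rw [Wmem_iff (by omega)] at h
  have h1 : A.size = m - 1 := h.1
  have h2 : A'.size = m - 1 := h.2.1
  have h3 := h.2.2
  rw [Wmem_iff (by omega)]
  refine ⟨show (node A leaf).size = m by simp [size]; omega,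
    show (node A' leaf).size = m by simp [size]; omega, ?_⟩
  exact QRR.2 h3

theorem WmemRL {r m : ℕ} (hm : 2 ≤ m) {A B' : BT} (h : Wmem (r+1) (m-1) (A, B')) :
    Wmem r m (node A leaf, node leaf B') := by
  rw [Wmem_iff (by omega)] at h
  have h1 : A.size = m - 1 := h.1
  have h2 : B'.size = m - 1 := h.2.1
  have h3 := h.2.2
  rw [Wmem_iff (by omega)]
  refine ⟨show (node A leaf).size = m by simp [size]; omega,
    show (node leaf B').size = m by simp [size]; omega, ?_⟩
  exact (QRL hm h1 h2).2 h3

theorem WmemLR {r m : ℕ} (hm : 2 ≤ m) {B A' : BT} (h : Wmem r (m-1) (B, A')) :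
    Wmem (r+1) m (node leaf B, node A' leaf) := by
  rw [Wmem_iff (by omega)] at h
  have h1 : B.size = m - 1 := h.1
  have h2 : A'.size = m - 1 := h.2.1
  have h3 := h.2.2
  rw [Wmem_iff (by omega)]
  refine ⟨show (node leaf B).size = m by simp [size]; omega,
    show (node A' leaf).size = m by simp [size]; omega, ?_⟩
  exact (QLR hm h1 h2).2 h3

theorem mem_cases {r m : ℕ} (hm : 2 ≤ m) {p : BT × BT} (h : Wmem r m p) :
    (∃ B B', p = (node leaf B, node leaf B') ∧ Wmem r (m-1) (B, B')) ∨
    (∃ A A', p = (node A leaf, node A' leaf) ∧ Wmem r (m-1) (A, A') ∧ A ≠ leaf ∧ A' ≠ leaf) ∨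
    (∃ A B', p = (node A leaf, node leaf B') ∧ Wmem (r+1) (m-1) (A, B') ∧ A ≠ leaf) ∨
    (∃ B A' s, r = s + 1 ∧ p = (node leaf B, node A' leaf) ∧ Wmem s (m-1) (B, A') ∧
      A' ≠ leaf) := by
  have h' := (Wmem_iff (show 1 ≤ m by omega)).1 h
  obtain ⟨h1, h2, hq⟩ := h'
  obtain ⟨T, T'⟩ := p
  simp only at h1 h2 hq
  -- T is a node
  cases T with
  | leaf => simp [size] at h1; omega
  | node x y =>
  cases T' with
  | leaf => simp [size] at h2; omega
  | node x' y' =>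
  have hxy : x = leaf ∨ (y = leaf ∧ x ≠ leaf) := by
    by_cases hx : x = leaf
    · left; exact hx
    · right
      refine ⟨?_, hx⟩
      by_contra hy
      exact notboth_u hq rfl hx hy
  have hxy' : x' = leaf ∨ (y' = leaf ∧ x' ≠ leaf) := by
    by_cases hx : x' = leaf
    · left; exact hx
    · right
      refine ⟨?_, hx⟩
      by_contra hy
      exact notboth_v hq rfl hx hy
  simp only [size] at h1 h2
  rcases hxy with hx | ⟨hy, hx⟩
  · rcases hxy' with hx' | ⟨hy', hx'⟩
    · -- LL
      subst hx; subst hx'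
      left
      refine ⟨y, y', rfl, ?_⟩
      rw [Wmem_iff (by omega)]
      have hys : y.size = m - 1 := by simp [size] at h1 ⊢; omega
      have hys' : y'.size = m - 1 := by simp [size] at h2 ⊢; omega
      exact ⟨hys, hys', (QLL hm hys hys').1 hq⟩
    · -- LR
      subst hx; subst hy'
      right; right; right
      have hys : y.size = m - 1 := by simp [size] at h1 ⊢; omega
      have hys' : x'.size = m - 1 := by simp [size] at h2 ⊢; omega
      cases r with
      | zero => exact absurd hq (QLR0 hm hys hys')
      | succ s =>
        refine ⟨y, x', s, rfl, rfl, ?_, hx'⟩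
        rw [Wmem_iff (by omega)]
        exact ⟨hys, hys', (QLR hm hys hys').1 hq⟩
  · rcases hxy' with hx' | ⟨hy', hx'⟩
    · -- RL
      subst hy; subst hx'
      right; right; left
      have hys : x.size = m - 1 := by simp [size] at h1 ⊢; omega
      have hys' : y'.size = m - 1 := by simp [size] at h2 ⊢; omega
      refine ⟨x, y', rfl, ?_, hx⟩
      rw [Wmem_iff (by omega)]
      exact ⟨hys, hys', (QRL hm hys hys').1 hq⟩
    · -- RR
      subst hy; subst hy'
      right; left
      have hys : x.size = m - 1 := by simp [size] at h1 ⊢; omega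
      have hys' : x'.size = m - 1 := by simp [size] at h2 ⊢; omega
      refine ⟨x, x', rfl, ?_, hx, hx'⟩
      rw [Wmem_iff (by omega)]
      exact ⟨hys, hys', QRR.1 hq⟩


theorem Wmem_zero {r : ℕ} {p : BT × BT} :
    Wmem r 0 p ↔ (r ≤ 1 ∧ p = (leaf, leaf)) := by
  constructor
  · rintro ⟨h1, h2, h3, h4, h5⟩
    have e1 : p.1 = leaf := size_eq_zero h1
    have e2 : p.2 = leaf := size_eq_zero h2
    refine ⟨?_, by rw [Prod.ext_iff]; exact ⟨e1, e2⟩⟩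
    by_contra hr
    push_neg at hr
    rw [e1, e2] at h5
    rw [canopy_eq, canopy_eq, bracket_lspine, bracket_rspine] at h5
    simp only [List.cons_eq_cons, true_and] at h5
    rw [map_min_eq_iff] at h5
    have h6 := h5.2 0
    have hlf : (bracket leaf) = ([] : List ℕ) := rfl
    rw [hlf] at h6
    simp only [List.nil_append, List.append_nil] at h6
    have hL : (List.replicate r (0:ℕ)).getD 0 0 = 0 := by simpa using pad_getD [] r 0
    have hR : (desc r (size leaf)).getD 0 0 = r - 1 := by
      have hz : size leaf = 0 := rfl
      rw [hz, desc_getD _ _ _ (by omega)]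
      omega
    rw [hL, hR] at h6
    omega
  · rintro ⟨hr, hp⟩
    subst hp
    interval_cases r
    · exact ⟨rfl, rfl, Relation.ReflTransGen.refl, Relation.ReflTransGen.refl, rfl⟩
    · refine ⟨rfl, rfl, Relation.ReflTransGen.refl, ?_, rfl⟩
      exact Relation.ReflTransGen.single (Rot.rotate leaf leaf leaf)

theorem Wmem_one {r : ℕ} {p : BT × BT} :
    Wmem r 1 p ↔ (r = 0 ∧ p = (node leaf leaf, node leaf leaf)) := by
  constructor
  · intro h
    have e1 : p.1 = node leaf leaf := size_eq_one h.1
    have e2 : p.2 = node leaf leaf := size_eq_one h.2.1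
    refine ⟨?_, by rw [Prod.ext_iff]; exact ⟨e1, e2⟩⟩
    have hq := ((Wmem_iff (le_refl 1)).1 h).2.2
    obtain ⟨hC1, hC2, hS1, hS2⟩ := hq
    by_contra hr
    have h2 := hS1 0 (by omega)
    rw [e1] at h2
    have : bracket (node leaf leaf) = [0] := rfl
    rw [this] at h2
    simp at h2
  · rintro ⟨hr, hp⟩
    subst hr; subst hp
    refine ⟨rfl, rfl, Relation.ReflTransGen.refl, ?_, rfl⟩
    exact Relation.ReflTransGen.single (Rot.rotate leaf leaf leaf)

-- finiteness
def treesL : ℕ → List BT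
  | 0 => [leaf]
  | n+1 =>
    (List.range (n+1)).flatMap (fun i =>
      (treesL (min i n)).flatMap (fun l => (treesL (n - i)).map (node l)))
decreasing_by
  · exact (by omega : n - i < n + 1)
  · exact (by omega : min i n < n + 1)

theorem mem_treesL : ∀ (n : ℕ) (T : BT), T.size = n → T ∈ treesL n := by
  intro n
  induction n using Nat.strong_induction_on with
  | _ n ih =>
    intro T hT
    cases T with
    | leaf => rw [← hT]; show leaf ∈ treesL 0; simp [treesL]
    | node l r =>
      have hsz : l.size + r.size + 1 = n := by rw [← hT]; rfl
      cases n with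
      | zero => omega
      | succ k =>
        rw [treesL, List.mem_flatMap]
        refine ⟨l.size, by rw [List.mem_range]; omega, ?_⟩
        rw [List.mem_flatMap]
        refine ⟨l, by rw [show min l.size k = l.size by omega]; exact ih l.size (by omega) l rfl, ?_⟩
        rw [List.mem_map]
        exact ⟨r, ih (k - l.size) (by omega) r (by omega), rfl⟩

theorem Wfin (r m : ℕ) : {p : BT × BT | Wmem r m p}.Finite := by
  apply Set.Finite.subset (Set.Finite.prod (List.finite_toSet (treesL m))
    (List.finite_toSet (treesL m)))
  rintro ⟨a, b⟩ h
  exact ⟨mem_treesL m a h.1, mem_treesL m b h.2.1⟩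


def Nf : ℕ → ℕ → ℕ
  | r, 0 => if r ≤ 1 then 1 else 0
  | r, 1 => if r = 0 then 1 else 0
  | r, (m+2) => 2 * Nf r (m+1) + Nf (r+1) (m+1) + (if r = 0 then 0 else Nf (r-1) (m+1))

theorem struct_eq (r m : ℕ) :
    {p : BT × BT | Wmem r (m+2) p} =
      (fun q : BT × BT => (node leaf q.1, node leaf q.2)) '' {p | Wmem r (m+1) p} ∪
      (fun q : BT × BT => (node q.1 leaf, node q.2 leaf)) '' {p | Wmem r (m+1) p} ∪
      (fun q : BT × BT => (node q.1 leaf, node leaf q.2)) '' {p | Wmem (r+1) (m+1) p} ∪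
      (fun q : BT × BT => (node leaf q.1, node q.2 leaf)) ''
        {p | 1 ≤ r ∧ Wmem (r-1) (m+1) p} := by
  have hm1 : m + 2 - 1 = m + 1 := rfl
  ext p
  simp only [Set.mem_setOf_eq, Set.mem_union, Set.mem_image]
  constructor
  · intro h
    rcases mem_cases (by omega) h with ⟨B, B', hp, hw⟩ | ⟨A, A', hp, hw, _⟩ |
      ⟨A, B', hp, hw, _⟩ | ⟨B, A', s, hr, hp, hw, _⟩
    · exact Or.inl (Or.inl (Or.inl ⟨(B, B'), hw, hp.symm⟩))
    · exact Or.inl (Or.inl (Or.inr ⟨(A, A'), hw, hp.symm⟩))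
    · exact Or.inl (Or.inr ⟨(A, B'), hw, hp.symm⟩)
    · exact Or.inr ⟨(B, A'), ⟨by omega, by rw [show r - 1 = s by omega]; exact hw⟩, hp.symm⟩
  · intro h
    rcases h with ((⟨q, hq, he⟩ | ⟨q, hq, he⟩) | ⟨q, hq, he⟩) | ⟨q, ⟨hr, hq⟩, he⟩
    · rw [← he]; exact WmemLL (m := m+2) (by omega) hq
    · rw [← he]; exact WmemRR (m := m+2) (by omega) hq
    · rw [← he]; exact WmemRL (m := m+2) (by omega) hq
    · rw [← he]
      have := WmemLR (m := m+2) (r := r-1) (by omega) hq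
      rwa [show r - 1 + 1 = r by omega] at this


theorem size_pos_ne_leaf {T : BT} {m : ℕ} (h : T.size = m) (hm : 1 ≤ m) : T ≠ leaf := by
  intro he
  rw [he] at h
  have : size leaf = 0 := rfl
  omega

theorem card_W : ∀ (m r : ℕ), ({p : BT × BT | Wmem r m p}).ncard = Nf r m := by
  intro m
  induction m using Nat.strong_induction_on with
  | _ m ih =>
    intro r
    match m with
    | 0 =>
      rcases le_or_gt r 1 with hr | hr
      · have he : {p : BT × BT | Wmem r 0 p} = {((leaf : BT), (leaf : BT))} := by
          ext p; simp [Wmem_zero, hr]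
        rw [he, Set.ncard_singleton]
        simp [Nf, hr]
      · have he : {p : BT × BT | Wmem r 0 p} = ∅ := by
          ext p; simp [Wmem_zero]; omega
        rw [he, Set.ncard_empty]
        simp only [Nf]
        rw [if_neg (by omega)]
    | 1 =>
      rcases Nat.eq_zero_or_pos r with hr | hr
      · subst hr
        have he : {p : BT × BT | Wmem 0 1 p} = {((node leaf leaf : BT), (node leaf leaf : BT))} := by
          ext p; simp [Wmem_one]
        rw [he, Set.ncard_singleton]
        simp [Nf]
      · have he : {p : BT × BT | Wmem r 1 p} = ∅ := by
          ext p; simp [Wmem_one]; intro h; omega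
        rw [he, Set.ncard_empty]
        simp only [Nf]
        rw [if_neg (by omega)]
    | (m+2) =>
      rw [struct_eq]
      set f1 : BT × BT → BT × BT := fun q => (node leaf q.1, node leaf q.2) with hf1
      set f2 : BT × BT → BT × BT := fun q => (node q.1 leaf, node q.2 leaf) with hf2
      set f3 : BT × BT → BT × BT := fun q => (node q.1 leaf, node leaf q.2) with hf3
      set f4 : BT × BT → BT × BT := fun q => (node leaf q.1, node q.2 leaf) with hf4
      set S1 := f1 '' {p | Wmem r (m+1) p} with hS1
      set S2 := f2 '' {p | Wmem r (m+1) p} with hS2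
      set S3 := f3 '' {p | Wmem (r+1) (m+1) p} with hS3
      set S4 := f4 '' {p | 1 ≤ r ∧ Wmem (r-1) (m+1) p} with hS4
      have inj1 : Function.Injective f1 := by
        rintro ⟨a, b⟩ ⟨c, d⟩ h
        simp only [hf1, Prod.mk.injEq, node.injEq] at h
        simp [Prod.ext_iff, h.1.2, h.2.2]
      have inj2 : Function.Injective f2 := by
        rintro ⟨a, b⟩ ⟨c, d⟩ h
        simp only [hf2, Prod.mk.injEq, node.injEq] at h
        simp [Prod.ext_iff, h.1.1, h.2.1]
      have inj3 : Function.Injective f3 := by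
        rintro ⟨a, b⟩ ⟨c, d⟩ h
        simp only [hf3, Prod.mk.injEq, node.injEq] at h
        simp [Prod.ext_iff, h.1.1, h.2.2]
      have inj4 : Function.Injective f4 := by
        rintro ⟨a, b⟩ ⟨c, d⟩ h
        simp only [hf4, Prod.mk.injEq, node.injEq] at h
        simp [Prod.ext_iff, h.1.2, h.2.1]
      have fin1 : S1.Finite := (Wfin r (m+1)).image _
      have fin2 : S2.Finite := (Wfin r (m+1)).image _
      have fin3 : S3.Finite := (Wfin (r+1) (m+1)).image _
      have fin4 : S4.Finite := by
        apply Set.Finite.image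
        exact (Wfin (r-1) (m+1)).subset (fun p hp => hp.2)
      -- disjointness
      have d12 : Disjoint S1 S2 := by
        rw [Set.disjoint_left]
        rintro a ⟨q, hq, he⟩ ⟨q', hq', he'⟩
        rw [← he'] at he
        simp only [hf1, hf2, Prod.mk.injEq, node.injEq] at he
        exact size_pos_ne_leaf hq'.1 (by omega) he.1.1.symm
      have d13 : Disjoint S1 S3 := by
        rw [Set.disjoint_left]
        rintro a ⟨q, hq, he⟩ ⟨q', hq', he'⟩
        rw [← he'] at he
        simp only [hf1, hf3, Prod.mk.injEq, node.injEq] at he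
        exact size_pos_ne_leaf hq'.1 (by omega) he.1.1.symm
      have d14 : Disjoint S1 S4 := by
        rw [Set.disjoint_left]
        rintro a ⟨q, hq, he⟩ ⟨q', hq', he'⟩
        rw [← he'] at he
        simp only [hf1, hf4, Prod.mk.injEq, node.injEq] at he
        exact size_pos_ne_leaf hq'.2.2.1 (by omega) he.2.1.symm
      have d23 : Disjoint S2 S3 := by
        rw [Set.disjoint_left]
        rintro a ⟨q, hq, he⟩ ⟨q', hq', he'⟩
        rw [← he'] at he
        simp only [hf2, hf3, Prod.mk.injEq, node.injEq] at he
        exact size_pos_ne_leaf hq.2.1 (by omega) he.2.1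
      have d24 : Disjoint S2 S4 := by
        rw [Set.disjoint_left]
        rintro a ⟨q, hq, he⟩ ⟨q', hq', he'⟩
        rw [← he'] at he
        simp only [hf2, hf4, Prod.mk.injEq, node.injEq] at he
        exact size_pos_ne_leaf hq.1 (by omega) he.1.1
      have d34 : Disjoint S3 S4 := by
        rw [Set.disjoint_left]
        rintro a ⟨q, hq, he⟩ ⟨q', hq', he'⟩
        rw [← he'] at he
        simp only [hf3, hf4, Prod.mk.injEq, node.injEq] at he
        exact size_pos_ne_leaf hq.1 (by omega) he.1.1
      have c1 : S1.ncard = Nf r (m+1) := by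
        rw [hS1, Set.ncard_image_of_injective _ inj1]; exact ih (m+1) (by omega) r
      have c2 : S2.ncard = Nf r (m+1) := by
        rw [hS2, Set.ncard_image_of_injective _ inj2]; exact ih (m+1) (by omega) r
      have c3 : S3.ncard = Nf (r+1) (m+1) := by
        rw [hS3, Set.ncard_image_of_injective _ inj3]; exact ih (m+1) (by omega) (r+1)
      have c4 : S4.ncard = (if r = 0 then 0 else Nf (r-1) (m+1)) := by
        rw [hS4, Set.ncard_image_of_injective _ inj4]
        by_cases h0 : r = 0
        · rw [if_pos h0, h0]
          have he0 : {p : BT × BT | 1 ≤ 0 ∧ Wmem (0-1) (m+1) p} = ∅ := by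
            ext p; simp
          rw [he0, Set.ncard_empty]
        · rw [if_neg h0]
          have he0 : {p : BT × BT | 1 ≤ r ∧ Wmem (r-1) (m+1) p} = {p | Wmem (r-1) (m+1) p} := by
            ext p
            simp only [Set.mem_setOf_eq, and_iff_right_iff_imp]
            intro _; omega
          rw [he0]
          exact ih (m+1) (by omega) (r-1)
      have d123 : Disjoint (S1 ∪ S2) S3 := by
        rw [Set.disjoint_union_left]; exact ⟨d13, d23⟩
      have d1234 : Disjoint (S1 ∪ S2 ∪ S3) S4 := by
        rw [Set.disjoint_union_left]
        refine ⟨by rw [Set.disjoint_union_left]; exact ⟨d14, d24⟩, d34⟩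
      rw [Set.ncard_union_eq d1234 ((fin1.union fin2).union fin3) fin4,
        Set.ncard_union_eq d123 (fin1.union fin2) fin3,
        Set.ncard_union_eq d12 fin1 fin2, c1, c2, c3, c4]
      simp only [Nf]
      by_cases h0 : r = 0
      · omega
      · omega


def Pf (r m : ℕ) : ℕ := if r < m then Nat.choose (2*m-1) (m-1-r) else 0

theorem pascal_r (r M : ℕ) (hr : 1 ≤ r) (hM : 1 ≤ M) :
    Pf r (M+1) = Pf (r-1) M + 2 * Pf r M + Pf (r+1) M := by
  rcases Nat.lt_or_ge r (M+1) with h1 | h1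
  · rcases Nat.eq_or_lt_of_le (show r ≤ M by omega) with h2 | h2
    · subst h2
      rw [Pf, Pf, Pf, Pf, if_pos (by omega), if_pos (by omega), if_neg (by omega),
        if_neg (by omega)]
      rw [show r+1-1-r = 0 by omega, show r-1-(r-1) = 0 by omega]
      simp
    · rcases Nat.eq_or_lt_of_le (show r ≤ M - 1 by omega) with h3 | h3
      · have hM2 : 2 ≤ M := by omega
        rw [Pf, Pf, Pf, Pf, if_pos (by omega), if_pos (by omega), if_pos (by omega),
          if_neg (by omega)]
        rw [show M+1-1-r = 1 by omega, show M-1-(r-1) = 1 by omega,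
          show M-1-r = 0 by omega]
        rw [Nat.choose_one_right, Nat.choose_one_right, Nat.choose_zero_right]
        omega
      · have hM2 : 2 ≤ M := by omega
        set t := M - r - 2 with ht
        rw [Pf, Pf, Pf, Pf, if_pos (by omega), if_pos (by omega), if_pos (by omega),
          if_pos (by omega)]
        rw [show M+1-1-r = t+2 by omega, show M-1-(r-1) = t+2 by omega,
          show M-1-r = t+1 by omega, show M-1-(r+1) = t by omega]
        set n2 := 2*M-1 with hn2
        rw [show 2*(M+1)-1 = n2+1+1 by omega]
        have e1 := Nat.choose_succ_succ (n2+1) (t+1)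
        have e2 := Nat.choose_succ_succ n2 t
        have e3 := Nat.choose_succ_succ n2 (t+1)
        simp only [Nat.succ_eq_add_one, show t+1+1 = t+2 from rfl] at e1 e3
        rw [e1, e3, e2]
        ring
  · rw [Pf, Pf, Pf, Pf, if_neg (by omega), if_neg (by omega), if_neg (by omega),
      if_neg (by omega)]

theorem pascal_0 (M : ℕ) (hM : 1 ≤ M) :
    Pf 0 (M+1) = 3 * Pf 0 M + Pf 1 M := by
  rcases Nat.eq_or_lt_of_le hM with h1 | h1
  · rw [← h1]
    decide
  · obtain ⟨u, rfl⟩ : ∃ u, M = u + 2 := ⟨M - 2, by omega⟩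
    rw [Pf, Pf, Pf, if_pos (by omega), if_pos (by omega), if_pos (by omega)]
    rw [show u+2+1-1-0 = u+2 by omega, show u+2-1-0 = u+1 by omega,
      show u+2-1-1 = u by omega, show 2*(u+2+1)-1 = 2*u+4+1 by omega,
      show 2*(u+2)-1 = 2*u+3 by omega]
    have e1 := Nat.choose_succ_succ (2*u+4) (u+1)
    have e2 := Nat.choose_succ_succ (2*u+3) u
    have e3 := Nat.choose_succ_succ (2*u+3) (u+1)
    have hsym : (2*u+3).choose (u+2) = (2*u+3).choose (u+1) := by
      have h2 : u+2 ≤ 2*u+3 := by omega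
      have := Nat.choose_symm h2
      rw [show 2*u+3 - (u+2) = u+1 by omega] at this
      exact this.symm
    simp only [Nat.succ_eq_add_one, show u+1+1 = u+2 from rfl] at e1 e3
    simp only [Nat.succ_eq_add_one, show 2*u+3+1 = 2*u+4 from rfl] at e2 e3
    rw [e1, e2, e3, hsym]
    ring

theorem NP_identity : ∀ m, 1 ≤ m → ∀ r, Nf r m + Pf (r+1) m = Pf r m := by
  intro m
  induction m using Nat.strong_induction_on with
  | _ m ih =>
    intro hm r
    match m with
    | 0 => omega
    | 1 =>
      rcases Nat.eq_zero_or_pos r with h0 | h0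
      · subst h0; decide
      · rw [Pf, Pf, if_neg (by omega), if_neg (by omega)]
        have hNf : Nf r 1 = if r = 0 then 1 else 0 := rfl
        rw [hNf, if_neg (by omega)]
    | (K+2) =>
      have hNf : Nf r (K+2) = 2 * Nf r (K+1) + Nf (r+1) (K+1) +
          (if r = 0 then 0 else Nf (r-1) (K+1)) := rfl
      rcases Nat.eq_zero_or_pos r with h0 | h0
      · subst h0
        have i0 := ih (K+1) (by omega) (by omega) 0
        have i1 := ih (K+1) (by omega) (by omega) 1
        have p0 := pascal_0 (K+1) (by omega)
        have p1 := pascal_r 1 (K+1) (by omega) (by omega)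
        rw [hNf, if_pos rfl]
        simp only [show (0:ℕ)+1 = 1 from rfl, show K+1+1 = K+2 from rfl,
          show (1:ℕ)+1 = 2 from rfl, show (1:ℕ)-1 = 0 from rfl] at i0 i1 p0 p1 ⊢
        omega
      · have is0 := ih (K+1) (by omega) (by omega) (r-1)
        have is1 := ih (K+1) (by omega) (by omega) r
        have is2 := ih (K+1) (by omega) (by omega) (r+1)
        have p1 := pascal_r r (K+1) (by omega) (by omega)
        have p2 := pascal_r (r+1) (K+1) (by omega) (by omega)
        rw [show r - 1 + 1 = r by omega] at is0
        rw [show r + 1 - 1 = r by omega] at p2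
        rw [hNf, if_neg (by omega : ¬ r = 0)]
        simp only [show K+1+1 = K+2 from rfl, show r+1+1 = r+2 from rfl]
          at is0 is1 is2 p1 p2 ⊢
        omega

theorem final_count (n : ℕ) (hn : 1 ≤ n) : (n + 1) * Nf 0 n = Nat.choose (2*n) n := by
  have key := NP_identity n hn 0
  rcases Nat.eq_or_lt_of_le hn with h1 | h1
  · rw [← h1]; decide
  · -- n ≥ 2
    set A := Nat.choose (2*n-1) (n-1) with hA
    set B := Pf 1 n with hB
    have hP0 : Pf 0 n = A := by
      rw [Pf, if_pos (by omega), show n-1-0 = n-1 by omega]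
    have hBval : B = Nat.choose (2*n-1) (n-2) := by
      rw [hB, Pf, if_pos (by omega), show n-1-1 = n-2 by omega]
    -- absorption: A * (n-1) = B * (n+1)
    have habs : A * (n-1) = B * (n+1) := by
      have := Nat.choose_succ_right_eq (2*n-1) (n-2)
      rw [show n-2+1 = n-1 by omega, show 2*n-1-(n-2) = n+1 by omega] at this
      rw [hA, hBval]
      omega
    have hCC : Nat.choose (2*n) n = 2 * A := by
      have e1 := Nat.choose_succ_succ (2*n-1) (n-1)
      simp only [Nat.succ_eq_add_one] at e1
      rw [show n-1+1 = n by omega, show 2*n-1+1 = 2*n by omega] at e1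
      have hsym : (2*n-1).choose n = (2*n-1).choose (n-1) := by
        have h2 : n ≤ 2*n-1 := by omega
        have := Nat.choose_symm h2
        rw [show 2*n-1-n = n-1 by omega] at this
        exact this.symm
      rw [e1, hsym, hA]
      omega
    rw [hP0] at key
    have step1 : (n+1) * Nf 0 n + (n+1) * B = (n+1) * A := by
      rw [← Nat.mul_add, key]
    have step2 : (n+1) * B = (n-1) * A := by
      rw [Nat.mul_comm (n+1) B, ← habs, Nat.mul_comm]
    rw [step2] at step1
    have step3 : (n+1) * A = (n-1) * A + 2 * A := by
      have : n + 1 = (n-1) + 2 := by omega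
      rw [this, Nat.add_mul]
    rw [hCC]
    omega


end BT

theorem count_modern_synchronized_intervals (n : ℕ) (hn : 1 ≤ n) :
    (n + 1) * Set.ncard {p : BT × BT | BT.interval p n ∧ BT.modern p ∧ BT.synced p} =
      Nat.choose (2 * n) n := by
  have hset : {p : BT × BT | BT.interval p n ∧ BT.modern p ∧ BT.synced p}
      = {p : BT × BT | BT.Wmem 0 n p} := by
    ext p
    simp only [Set.mem_setOf_eq]
    constructor
    · rintro ⟨⟨h1, h2, h3⟩, h4, h5⟩
      exact ⟨h1, h2, h3, h4, h5⟩
    · rintro ⟨h1, h2, h3, h4, h5⟩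
      exact ⟨⟨h1, h2, h3⟩, h4, h5⟩
  rw [hset, BT.card_W n 0]
  exact BT.final_count n hn
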